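/- The function uₘ(z) = m + Φ(z) + ψ⁺(z)·φ(z)/(1 − Φ(z)) is strictly increasing in z. -/

import Mathlib

open Real MeasureTheory Set Filter

noncomputable def stdGaussPdf (x : ℝ) : ℝ :=
  (Real.sqrt (2 * Real.pi))⁻¹ * Real.exp (-x ^ 2 / 2)

noncomputable def stdGaussCdf (x : ℝ) : ℝ := ∫ t in Set.Iic x, stdGaussPdf t

noncomputable def psiPlus (z : ℝ) : ℝ := stdGaussPdf z - z * stdGaussCdf (-z)

noncomputable def uFun (m : ℕ) (z : ℝ) : ℝ :=
  m + stdGaussCdf z + psiPlus z * stdGaussPdf z / (1 - stdGaussCdf z)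

lemma pdf_pos (x : ℝ) : 0 < stdGaussPdf x := by
  unfold stdGaussPdf
  positivity

lemma pdf_even (x : ℝ) : stdGaussPdf (-x) = stdGaussPdf x := by
  simp [stdGaussPdf]

lemma pdf_integrable : Integrable stdGaussPdf := by
  have h : Integrable (fun x : ℝ => Real.exp (-(1/2) * x ^ 2)) := integrable_exp_neg_mul_sq (by norm_num)
  have := h.const_mul (Real.sqrt (2 * Real.pi))⁻¹
  refine this.congr ?_
  filter_upwards with x
  unfold stdGaussPdf
  ring_nf

lemma pdf_total : ∫ x, stdGaussPdf x = 1 := by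
  have h : ∫ x : ℝ, Real.exp (-(1/2) * x ^ 2) = Real.sqrt (π / (1/2)) := integral_gaussian (1/2)
  have h2 : ∫ x, stdGaussPdf x = (Real.sqrt (2 * π))⁻¹ * ∫ x : ℝ, Real.exp (-(1/2) * x ^ 2) := by
    rw [← integral_const_mul]
    congr 1 with x
    unfold stdGaussPdf
    ring_nf
  rw [h2, h]
  have : π / (1/2) = 2 * π := by ring
  rw [this, inv_mul_cancel₀]
  positivity

lemma hasDerivAt_pdf (x : ℝ) : HasDerivAt stdGaussPdf (-x * stdGaussPdf x) x := by
  have h1 : HasDerivAt (fun x : ℝ => -x ^ 2 / 2) (-x) x := by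
    have := ((hasDerivAt_pow 2 x).neg).div_const 2
    refine this.congr_deriv ?_
    ring
  have h2 := (h1.exp).const_mul (Real.sqrt (2 * Real.pi))⁻¹
  refine h2.congr_deriv ?_
  unfold stdGaussPdf
  ring

lemma pdf_continuous : Continuous stdGaussPdf := by
  unfold stdGaussPdf
  continuity

lemma hasDerivAt_cdf (x : ℝ) : HasDerivAt stdGaussCdf (stdGaussPdf x) x := by
  have key : ∀ y : ℝ, stdGaussCdf y = stdGaussCdf 0 + ∫ t in (0:ℝ)..y, stdGaussPdf t := by
    intro y
    rw [← intervalIntegral.integral_Iic_sub_Iic pdf_integrable.integrableOn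
      pdf_integrable.integrableOn]
    unfold stdGaussCdf
    ring
  have h : HasDerivAt (fun y => stdGaussCdf 0 + ∫ t in (0:ℝ)..y, stdGaussPdf t)
      (stdGaussPdf x) x := by
    have := intervalIntegral.integral_hasDerivAt_right
      (pdf_integrable.intervalIntegrable (a := 0) (b := x))
      pdf_continuous.aestronglyMeasurable.stronglyMeasurableAtFilter
      pdf_continuous.continuousAt
    exact (this.const_add (stdGaussCdf 0))
  exact h.congr_of_eventuallyEq (Filter.Eventually.of_forall fun y => key y)

lemma cdf_neg (z : ℝ) : stdGaussCdf (-z) = 1 - stdGaussCdf z := by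
  have h1 : stdGaussCdf (-z) = ∫ t in Set.Ioi z, stdGaussPdf t := by
    unfold stdGaussCdf
    have := integral_comp_neg_Ioi z stdGaussPdf
    simp_rw [pdf_even] at this
    exact this.symm
  have h2 := intervalIntegral.integral_Iic_add_Ioi (b := z) (μ := volume)
    pdf_integrable.integrableOn pdf_integrable.integrableOn
  rw [pdf_total] at h2
  rw [h1]
  unfold stdGaussCdf
  linarith

lemma setint_pos {s : Set ℝ} (hs : MeasurableSet s) (f : ℝ → ℝ)
    (hpos : ∀ x ∈ s, 0 < f x) (hint : IntegrableOn f s)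
    (hvol : 0 < volume s) : 0 < ∫ x in s, f x := by
  rw [MeasureTheory.integral_pos_iff_support_of_nonneg_ae ?hf hint]
  case hf =>
    rw [Filter.EventuallyLE, MeasureTheory.ae_restrict_iff' hs]
    filter_upwards with x hx using (hpos x hx).le
  refine lt_of_lt_of_le (b := (volume.restrict s) s) ?_ (measure_mono ?_)
  · rw [Measure.restrict_apply' hs]
    simpa using hvol
  · intro x hx
    exact (hpos x hx).ne'

lemma cdf_pos (z : ℝ) : 0 < stdGaussCdf z := by
  unfold stdGaussCdf
  refine setint_pos measurableSet_Iic _ (fun x _ => pdf_pos x) pdf_integrable.integrableOn ?_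
  simp [Real.volume_Iic]

lemma cdf_lt_one (z : ℝ) : stdGaussCdf z < 1 := by
  have := cdf_pos (-z)
  rw [cdf_neg] at this
  linarith

lemma pdf_tendsto_atBot : Filter.Tendsto stdGaussPdf Filter.atBot (nhds 0) := by
  have hsq : Filter.Tendsto (fun x : ℝ => x ^ 2) Filter.atBot Filter.atTop := by
    have h0 : Filter.Tendsto (fun x : ℝ => x ^ 2) Filter.atTop Filter.atTop :=
      tendsto_pow_atTop (by norm_num)
    have hn : Filter.Tendsto (fun x : ℝ => -x) Filter.atBot Filter.atTop :=
      tendsto_neg_atBot_atTop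
    have := h0.comp hn
    exact this.congr fun x : ℝ => by simp [Function.comp, neg_pow]
  have h1 : Filter.Tendsto (fun x : ℝ => -x ^ 2 / 2) Filter.atBot Filter.atBot := by
    have := (Filter.Tendsto.const_mul_atTop_of_neg (r := (-(1/2):ℝ)) (by norm_num) hsq)
    exact this.congr fun x : ℝ => by ring
  have h2 := Real.tendsto_exp_atBot.comp h1
  have h3 := h2.const_mul (Real.sqrt (2 * Real.pi))⁻¹
  simp only [Function.comp, mul_zero] at h3
  unfold stdGaussPdf
  exact h3

lemma tpdf_integrable : Integrable (fun t => -t * stdGaussPdf t) := by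
  have h := (integrable_mul_exp_neg_mul_sq (b := 1/2) (by norm_num)).const_mul
    (-(Real.sqrt (2 * Real.pi))⁻¹)
  refine h.congr ?_
  filter_upwards with x
  unfold stdGaussPdf
  ring_nf

lemma mills_int (a : ℝ) : ∫ t in Set.Iic a, (-t) * stdGaussPdf t = stdGaussPdf a := by
  have h := MeasureTheory.integral_Iic_of_hasDerivAt_of_tendsto'
    (f := stdGaussPdf) (f' := fun t => -t * stdGaussPdf t) (a := a) (m := 0)
    (fun x _ => hasDerivAt_pdf x) tpdf_integrable.integrableOn pdf_tendsto_atBot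
  rw [h]; ring

lemma psiPlus_pos (z : ℝ) : 0 < psiPlus z := by
  have key : psiPlus z = ∫ t in Set.Iic (-z), (-t - z) * stdGaussPdf t := by
    unfold psiPlus stdGaussCdf
    rw [show (fun t => (-t - z) * stdGaussPdf t) = fun t =>
      (-t) * stdGaussPdf t - z * stdGaussPdf t from funext fun t => by ring]
    rw [MeasureTheory.integral_sub tpdf_integrable.integrableOn
      ((pdf_integrable.const_mul z).integrableOn), mills_int, pdf_even,
      MeasureTheory.integral_const_mul]
  rw [key]
  have hsplit : ∫ t in Set.Iic (-z), (-t - z) * stdGaussPdf t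
      = ∫ t in Set.Iio (-z), (-t - z) * stdGaussPdf t := by
    rw [MeasureTheory.integral_Iic_eq_integral_Iio]
  rw [hsplit]
  refine setint_pos measurableSet_Iio _ (fun x hx => ?_) ?_ (by simp [Real.volume_Iio])
  · have : x < -z := hx
    have := pdf_pos x
    nlinarith
  · refine MeasureTheory.Integrable.integrableOn ?_
    refine (tpdf_integrable.sub (pdf_integrable.const_mul z)).congr ?_
    filter_upwards with x
    simp only [Pi.sub_apply]
    ring

lemma hasDerivAt_u (m : ℕ) (z : ℝ) :
    HasDerivAt (uFun m)
      (psiPlus z ^ 2 * stdGaussPdf z / (1 - stdGaussCdf z) ^ 2) z := by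
  have hQ : (1 : ℝ) - stdGaussCdf z ≠ 0 := by have := cdf_lt_one z; linarith
  have hΦ := hasDerivAt_cdf z
  have hφ := hasDerivAt_pdf z
  have hΦn : HasDerivAt (fun y => stdGaussCdf (-y)) (-stdGaussPdf z) z := by
    have h := (hasDerivAt_cdf (-z)).comp z (hasDerivAt_neg z)
    have : stdGaussPdf (-z) * (-1) = -stdGaussPdf z := by rw [pdf_even]; ring
    rw [this] at h
    exact h
  have hψ : HasDerivAt psiPlus (-(stdGaussCdf (-z))) z := by
    have h := hφ.sub ((hasDerivAt_id z).mul hΦn)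
    simp only [id] at h
    have e : -z * stdGaussPdf z - (1 * stdGaussCdf (-z) + z * -stdGaussPdf z)
        = -(stdGaussCdf (-z)) := by ring
    rw [e] at h
    exact h.congr_of_eventuallyEq (Filter.Eventually.of_forall fun y => by
      unfold psiPlus; simp)
  have hnum := hψ.mul hφ
  have hden : HasDerivAt (fun y => 1 - stdGaussCdf y) (-stdGaussPdf z) z := by
    have := (hasDerivAt_const z (1:ℝ)).sub hΦ
    exact this.congr_deriv (by ring)
  have hdiv := hnum.div hden hQ
  have hfinal := ((hasDerivAt_const z (m:ℝ)).add hΦ).add hdiv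
  have heq : uFun m = fun y =>
      (m : ℝ) + stdGaussCdf y + psiPlus y * stdGaussPdf y / (1 - stdGaussCdf y) := rfl
  rw [heq]
  refine hfinal.congr_deriv ?_
  have hψval : psiPlus z = stdGaussPdf z - z * (1 - stdGaussCdf z) := by
    unfold psiPlus; rw [cdf_neg]
  rw [cdf_neg, Pi.mul_apply, hψval]
  field_simp
  ring

/-- `uₘ(z) = m + Φ(z) + ψ⁺(z)·φ(z)/(1 − Φ(z))` is strictly increasing in `z`. -/
theorem stmt11 (m : ℕ) (hm : 1 ≤ m) : StrictMono (uFun m) := by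
  apply strictMono_of_deriv_pos
  intro z
  rw [(hasDerivAt_u m z).deriv]
  have h1 := psiPlus_pos z
  have h2 := pdf_pos z
  have h3 : (0:ℝ) < 1 - stdGaussCdf z := by have := cdf_lt_one z; linarith
  positivity
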